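/- Let S be a positive integer, let p̂, p : Fin S → ℝ be probability vectors (nonnegative entries summing to 1), let n > 0 and ι > 0 be real numbers, and let u : Fin S → ℝ satisfy |u_i − Σⱼ pⱼ uⱼ| ≤ 1 for every i. Suppose |p̂ᵢ − pᵢ| ≤ √(2·pᵢ·ι/n) + ι/(3n) for every i. Then Σᵢ (p̂ᵢ − pᵢ)·uᵢ ≤ √(2·S·𝕍(p,u)·ι/n) + S·ι/(3n). -/

import Mathlib

open Real Finset

/-- The variance functional `𝕍(p, v) = ∑ᵢ pᵢ vᵢ² − (∑ᵢ pᵢ vᵢ)²`. -/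
noncomputable def varV {S : ℕ} (p v : Fin S → ℝ) : ℝ :=
  (∑ i, p i * v i ^ 2) - (∑ i, p i * v i) ^ 2

theorem estimated_transition_error_bound
    (S : ℕ) (hS : 0 < S) (phat p : Fin S → ℝ)
    (hphat_nonneg : ∀ i, 0 ≤ phat i) (hphat_sum : ∑ i, phat i = 1)
    (hp_nonneg : ∀ i, 0 ≤ p i) (hp_sum : ∑ i, p i = 1)
    (n ι : ℝ) (hn : 0 < n) (hι : 0 < ι)
    (u : Fin S → ℝ) (hu : ∀ i, |u i - ∑ j, p j * u j| ≤ 1)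
    (hclose : ∀ i, |phat i - p i| ≤ Real.sqrt (2 * p i * ι / n) + ι / (3 * n)) :
    ∑ i, (phat i - p i) * u i ≤
      Real.sqrt (2 * S * varV p u * ι / n) + S * ι / (3 * n) := by
  set m := ∑ j, p j * u j with hm
  set v : Fin S → ℝ := fun i => u i - m with hvdef
  have hv1 : ∀ i, |v i| ≤ 1 := hu
  have hsum0 : ∑ i, (phat i - p i) = 0 := by
    rw [Finset.sum_sub_distrib, hphat_sum, hp_sum]; ring
  have key : ∑ i, (phat i - p i) * u i = ∑ i, (phat i - p i) * v i := by
    simp only [hvdef, mul_sub]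
    rw [Finset.sum_sub_distrib, ← Finset.sum_mul, hsum0]
    ring
  have hvar : ∑ i, p i * v i ^ 2 = varV p u := by
    simp only [hvdef, varV, sub_sq, mul_add, mul_sub]
    rw [Finset.sum_add_distrib, Finset.sum_sub_distrib]
    have h1 : ∑ i, p i * (2 * u i * m) = 2 * m ^ 2 := by
      rw [show (fun i => p i * (2 * u i * m)) = fun i => (p i * u i) * (2 * m) by
        funext i; ring]
      rw [← Finset.sum_mul, ← hm]; ring
    have h2 : ∑ i, p i * m ^ 2 = m ^ 2 := by
      rw [← Finset.sum_mul, hp_sum, one_mul]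
    rw [h1, h2]; ring
  have hvarnn : 0 ≤ ∑ i, p i * v i ^ 2 :=
    Finset.sum_nonneg fun i _ => mul_nonneg (hp_nonneg i) (sq_nonneg _)
  have hιn : 0 ≤ ι / (3 * n) := by positivity
  have step1 : ∑ i, (phat i - p i) * v i ≤
      ∑ i, (Real.sqrt (2 * p i * ι / n) + ι / (3 * n)) * |v i| := by
    apply Finset.sum_le_sum
    intro i _
    calc (phat i - p i) * v i ≤ |(phat i - p i) * v i| := le_abs_self _
      _ = |phat i - p i| * |v i| := abs_mul _ _
      _ ≤ (Real.sqrt (2 * p i * ι / n) + ι / (3 * n)) * |v i| :=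
        mul_le_mul_of_nonneg_right (hclose i) (abs_nonneg _)
  have step2 : ∑ i, (Real.sqrt (2 * p i * ι / n) + ι / (3 * n)) * |v i| ≤
      (∑ i, Real.sqrt (2 * p i * ι / n) * |v i|) + S * ι / (3 * n) := by
    simp only [add_mul]
    rw [Finset.sum_add_distrib]
    gcongr
    calc ∑ i : Fin S, ι / (3 * n) * |v i| ≤ ∑ i : Fin S, ι / (3 * n) * 1 :=
          Finset.sum_le_sum fun i _ => mul_le_mul_of_nonneg_left (hv1 i) hιn
      _ = S * ι / (3 * n) := by
          rw [Finset.sum_const, Finset.card_univ, Fintype.card_fin]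
          push_cast; ring
  -- Cauchy-Schwarz
  have hcs : (∑ i, Real.sqrt (p i) * |v i|) ^ 2 ≤ S * ∑ i, p i * v i ^ 2 := by
    have h := Finset.sum_mul_sq_le_sq_mul_sq Finset.univ (fun _ => (1 : ℝ))
      (fun i => Real.sqrt (p i) * |v i|)
    simp only [one_pow, one_mul, Finset.sum_const, Finset.card_univ,
      Fintype.card_fin, nsmul_eq_mul] at h
    calc (∑ i, Real.sqrt (p i) * |v i|) ^ 2
        ≤ S * ∑ i, (Real.sqrt (p i) * |v i|) ^ 2 := by linarith [h]
      _ = S * ∑ i, p i * v i ^ 2 := by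
          congr 1
          apply Finset.sum_congr rfl
          intro i _
          rw [mul_pow, Real.sq_sqrt (hp_nonneg i), sq_abs]
  have hcs' : ∑ i, Real.sqrt (p i) * |v i| ≤ Real.sqrt (S * ∑ i, p i * v i ^ 2) := by
    rw [show Real.sqrt (S * ∑ i, p i * v i ^ 2) = Real.sqrt (S * ∑ i, p i * v i ^ 2) from rfl]
    have hnn : (0:ℝ) ≤ ∑ i, Real.sqrt (p i) * |v i| :=
      Finset.sum_nonneg fun i _ => mul_nonneg (Real.sqrt_nonneg _) (abs_nonneg _)
    exact (Real.le_sqrt hnn (by positivity)).mpr hcs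
  have step3 : ∑ i, Real.sqrt (2 * p i * ι / n) * |v i| ≤
      Real.sqrt (2 * S * varV p u * ι / n) := by
    have hsplit : ∀ i, Real.sqrt (2 * p i * ι / n) =
        Real.sqrt (2 * ι / n) * Real.sqrt (p i) := by
      intro i
      rw [← Real.sqrt_mul (by positivity)]
      congr 1; ring
    calc ∑ i, Real.sqrt (2 * p i * ι / n) * |v i|
        = Real.sqrt (2 * ι / n) * ∑ i, Real.sqrt (p i) * |v i| := by
          rw [Finset.mul_sum]
          exact Finset.sum_congr rfl fun i _ => by rw [hsplit i]; ring
      _ ≤ Real.sqrt (2 * ι / n) * Real.sqrt (S * ∑ i, p i * v i ^ 2) :=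
          mul_le_mul_of_nonneg_left hcs' (Real.sqrt_nonneg _)
      _ = Real.sqrt (2 * S * varV p u * ι / n) := by
          rw [← Real.sqrt_mul (by positivity), hvar]
          congr 1; ring
  calc ∑ i, (phat i - p i) * u i = ∑ i, (phat i - p i) * v i := key
    _ ≤ ∑ i, (Real.sqrt (2 * p i * ι / n) + ι / (3 * n)) * |v i| := step1
    _ ≤ (∑ i, Real.sqrt (2 * p i * ι / n) * |v i|) + S * ι / (3 * n) := step2
    _ ≤ Real.sqrt (2 * S * varV p u * ι / n) + S * ι / (3 * n) :=
        add_le_add_left step3 _
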